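/- Let d ≥ 2, n ≥ 1, ω = e^{2πi/d}. Applying H^{⊗n} to the phased GHZ state |ψ_m⟩ = (1/√d) ∑_{j=0}^{d-1} ω^{jm} |j⟩^{⊗n} yields the state (1/√{d^{n-1}}) ∑_{k ∈ (ℤ_d)^n, m + ‖k‖ ≡ 0 (mod d)} |k⟩, where ‖k‖ = ∑_i k_i. -/

import Mathlib

noncomputable def Hmat (d : ℕ) : Matrix (Fin d) (Fin d) ℂ :=
  fun j s => (Complex.exp (2 * Real.pi * Complex.I / d)) ^ ((j : ℕ) * (s : ℕ)) / Real.sqrt d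

/-- Action of `H^{⊗n}` on a state of `n` qudits. -/
noncomputable def Hn (d n : ℕ) (ψ : (Fin n → Fin d) → ℂ) : (Fin n → Fin d) → ℂ :=
  fun k => ∑ j : Fin n → Fin d, (∏ i, Hmat d (k i) (j i)) * ψ j

/-- The phased GHZ state `|ψ_m⟩ = (1/√d) ∑_j ω^{jm} |j⟩^{⊗n}`. -/
noncomputable def psiGHZ (d n m : ℕ) : (Fin n → Fin d) → ℂ :=
  fun v => (1 / Real.sqrt d) *
    ∑ j : Fin d, (if v = fun _ => j then
      (Complex.exp (2 * Real.pi * Complex.I / d)) ^ ((j : ℕ) * m) else 0)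

theorem hadamard_on_phased_ghz (d n m : ℕ) (hd : 2 ≤ d) (hn : 1 ≤ n) :
    Hn d n (psiGHZ d n m) = fun (k : Fin n → Fin d) =>
      if (m + ∑ i, (k i : ℕ)) % d = 0 then ((1 / Real.sqrt ((d : ℝ) ^ (n - 1)) : ℝ) : ℂ)
      else 0 := by
  have hd0 : d ≠ 0 := by omega
  have hprim : IsPrimitiveRoot (Complex.exp (2 * Real.pi * Complex.I / d)) d :=
    Complex.isPrimitiveRoot_exp d hd0
  set ω : ℂ := Complex.exp (2 * Real.pi * Complex.I / d) with hω
  funext k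
  show (∑ j : Fin n → Fin d, (∏ i, Hmat d (k i) (j i)) * psiGHZ d n m j) = _
  have step1 : (∑ j : Fin n → Fin d, (∏ i, Hmat d (k i) (j i)) * psiGHZ d n m j)
      = (1 / Real.sqrt d : ℂ) * ∑ j' : Fin d,
          (∏ i, Hmat d (k i) j') * ω ^ ((j' : ℕ) * m) := by
    unfold psiGHZ
    simp only [Finset.mul_sum, mul_ite, mul_zero]
    rw [Finset.sum_comm]
    simp only [Finset.sum_ite_eq', Finset.mem_univ, if_true, Finset.mul_sum]
    exact Finset.sum_congr rfl fun j' _ => by ring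
  rw [step1]
  have hprod : ∀ j' : Fin d, (∏ i, Hmat d (k i) j')
      = ω ^ ((∑ i, (k i : ℕ)) * (j' : ℕ)) / ((Real.sqrt d : ℂ)) ^ n := by
    intro j'
    unfold Hmat
    rw [Finset.prod_div_distrib, Finset.prod_const, Finset.card_univ, Fintype.card_fin]
    rw [Finset.prod_pow_eq_pow_sum, ← Finset.sum_mul]
  have step2 : (∑ j' : Fin d, (∏ i, Hmat d (k i) j') * ω ^ ((j' : ℕ) * m))
      = (∑ j' : Fin d, (ω ^ (m + ∑ i, (k i : ℕ))) ^ (j' : ℕ)) / ((Real.sqrt d : ℂ)) ^ n := by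
    rw [Finset.sum_div]
    refine Finset.sum_congr rfl fun j' _ => ?_
    rw [hprod j', div_mul_eq_mul_div, ← pow_add, ← pow_mul]
    congr 2
    ring
  rw [step2]
  have hgeom : (∑ j' : Fin d, (ω ^ (m + ∑ i, (k i : ℕ))) ^ (j' : ℕ))
      = if (m + ∑ i, (k i : ℕ)) % d = 0 then (d : ℂ) else 0 := by
    rw [Fin.sum_univ_eq_sum_range]
    by_cases h : (m + ∑ i, (k i : ℕ)) % d = 0
    · have h1 : ω ^ (m + ∑ i, (k i : ℕ)) = 1 :=
        (hprim.pow_eq_one_iff_dvd _).mpr (Nat.dvd_of_mod_eq_zero h)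
      simp [h, h1]
    · have h1 : ω ^ (m + ∑ i, (k i : ℕ)) ≠ 1 := by
        intro h1
        exact h ((Nat.dvd_iff_mod_eq_zero).mp
          ((hprim.pow_eq_one_iff_dvd _).mp h1))
      have h2 : (ω ^ (m + ∑ i, (k i : ℕ))) ^ d = 1 := by
        rw [← pow_mul, mul_comm, pow_mul, hprim.pow_eq_one, one_pow]
      rw [geom_sum_eq h1, h2, sub_self, zero_div, if_neg h]
  rw [hgeom]
  by_cases h : (m + ∑ i, (k i : ℕ)) % d = 0
  · simp only [h, if_true]
    have hdpos : (0:ℝ) < d := by positivity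
    have hsq : (0:ℝ) < Real.sqrt d := Real.sqrt_pos.mpr hdpos
    have hne : ((Real.sqrt d : ℝ) : ℂ) ≠ 0 := by exact_mod_cast hsq.ne'
    have key : Real.sqrt ((d:ℝ) ^ (n-1)) = (Real.sqrt d) ^ (n-1) := by
      rw [show ((d:ℝ)^(n-1)) = ((Real.sqrt d)^(n-1))^2 by
        rw [← pow_mul, mul_comm, pow_mul, Real.sq_sqrt hdpos.le]]
      exact Real.sqrt_sq (by positivity)
    rw [key]
    have hd2 : ((Real.sqrt d : ℝ) : ℂ) ^ 2 = (d : ℂ) := by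
      rw [← Complex.ofReal_pow, Real.sq_sqrt hdpos.le]
      norm_cast
    have hn1 : n - 1 + 2 = n + 1 := by omega
    have main : ((Real.sqrt d : ℝ) : ℂ) ^ n * ((Real.sqrt d : ℝ) : ℂ)
        = (d:ℂ) * (((Real.sqrt d) ^ (n-1) : ℝ) : ℂ) := by
      push_cast
      calc ((Real.sqrt d : ℝ) : ℂ) ^ n * ((Real.sqrt d : ℝ) : ℂ)
          = ((Real.sqrt d : ℝ) : ℂ) ^ (n + 1) := by ring
        _ = ((Real.sqrt d : ℝ) : ℂ) ^ (n - 1 + 2) := by rw [hn1]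
        _ = ((Real.sqrt d : ℝ) : ℂ) ^ (n - 1) * ((Real.sqrt d : ℝ) : ℂ) ^ 2 := by ring
        _ = (d:ℂ) * ((Real.sqrt d : ℝ) : ℂ) ^ (n - 1) := by rw [hd2]; ring
    have hne2 : (((Real.sqrt d) ^ (n-1) : ℝ) : ℂ) ≠ 0 := by
      have : ((Real.sqrt d : ℝ) : ℂ) ^ (n-1) ≠ 0 := pow_ne_zero _ hne
      push_cast
      exact this
    have hdC : ((d:ℂ)) ≠ 0 := by exact_mod_cast (by omega : d ≠ 0)
    field_simp
    push_cast at main ⊢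
    have h3 : ((Real.sqrt d : ℝ) : ℂ) ^ (n - 1) * (((Real.sqrt d : ℝ) : ℂ)⁻¹) ^ (n - 1) = 1 := by
      rw [← mul_pow, mul_inv_cancel₀ hne, one_pow]
    linear_combination -((((Real.sqrt d : ℝ) : ℂ)⁻¹) ^ (n - 1)) * main - (d:ℂ) * h3
  · simp [h]
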